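/- Fix a real κ ≥ 1 and reals λ̂₁ ≥ λ̂₂ ≥ ⋯ ≥ λ̂_p ≥ 0 (p a positive integer) with λ̂₁ > 0 and λ̂_p = 0. Then f attains a unique global minimum over (0, ∞) at some point μ*, and this μ* satisfies 0 < μ* ≤ λ̂₁/κ and f′(μ*) = 0. -/

import Mathlib

open Asymptotics Filter Set

/-- `gfun κ λ̂ μ = (min (max μ λ̂) (κμ) − λ̂)²`. -/
noncomputable def gfun (κ lamh μ : ℝ) : ℝ := (min (max μ lamh) (κ * μ) - lamh) ^ 2

/-- `ffun κ p λ̂ μ = ∑_{i=1}^p gfun κ λ̂ᵢ μ` (1-based indexing of `λ̂`). -/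
noncomputable def ffun (κ : ℝ) (p : ℕ) (lamhat : ℕ → ℝ) (μ : ℝ) : ℝ :=
  ∑ i ∈ Finset.Icc 1 p, gfun κ (lamhat i) μ

noncomputable def Dfun (κ : ℝ) (p : ℕ) (lamhat : ℕ → ℝ) (μ : ℝ) : ℝ :=
  ∑ i ∈ Finset.Icc 1 p, (2 * max (μ - lamhat i) 0 + κ * (2 * min (κ * μ - lamhat i) 0))

set_option linter.unusedSectionVars false

lemma phi_hasDerivAt (x : ℝ) : HasDerivAt (fun y : ℝ => max y 0 ^ 2) (2 * max x 0) x := by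
  rcases lt_trichotomy x 0 with hx | hx | hx
  · have h : (fun y : ℝ => max y 0 ^ 2) =ᶠ[nhds x] fun _ => (0:ℝ) := by
      filter_upwards [eventually_lt_nhds hx] with y hy
      simp [max_eq_right hy.le]
    rw [max_eq_right hx.le, mul_zero]
    exact (hasDerivAt_const x (0:ℝ)).congr_of_eventuallyEq h
  · subst hx
    rw [hasDerivAt_iff_isLittleO]
    rw [isLittleO_iff]
    intro c hc
    filter_upwards [Metric.eventually_nhds_iff.mpr ⟨c, hc, fun {y} hy => hy⟩] with y hy
    simp only [Real.dist_eq, sub_zero] at hy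
    have h1 : |max y 0 ^ 2| ≤ c * |y| := by
      rw [abs_of_nonneg (by positivity)]
      have : max y 0 ≤ |y| := le_trans (max_le (le_abs_self y) (abs_nonneg y)) le_rfl
      nlinarith [abs_nonneg y, le_max_right y 0, hy.le]
    simpa using h1
  · have h : (fun y : ℝ => max y 0 ^ 2) =ᶠ[nhds x] fun y => y ^ 2 := by
      filter_upwards [eventually_gt_nhds hx] with y hy
      simp [max_eq_left hy.le]
    rw [max_eq_left hx.le]
    have := (hasDerivAt_pow 2 x)
    simp only [Nat.cast_ofNat, pow_one] at this
    exact (by simpa [mul_comm] using this : HasDerivAt (fun y : ℝ => y ^ 2) (2 * x) x).congr_of_eventuallyEq h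

lemma psi_hasDerivAt (x : ℝ) : HasDerivAt (fun y : ℝ => min y 0 ^ 2) (2 * min x 0) x := by
  have k : ∀ y : ℝ, max (-y) 0 = -(min y 0) := fun y => by rw [← neg_zero, max_neg_neg, neg_zero]
  have h := (phi_hasDerivAt (-x)).comp x (hasDerivAt_neg x)
  have heq : (fun y : ℝ => min y 0 ^ 2) = (fun y : ℝ => max y 0 ^ 2) ∘ fun y => -y := by
    funext y
    simp [Function.comp, k, neg_pow]
  rw [heq]
  refine h.congr_deriv ?_
  rw [k x]
  ring

lemma gfun_eq (κ lamh : ℝ) (hκ : 1 ≤ κ) (hl : 0 ≤ lamh) (μ : ℝ) :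
    gfun κ lamh μ = max (μ - lamh) 0 ^ 2 + min (κ * μ - lamh) 0 ^ 2 := by
  unfold gfun
  rcases le_total lamh μ with h | h
  · have hμ : 0 ≤ μ := le_trans hl h
    have hκμ : μ ≤ κ * μ := by nlinarith
    rw [max_eq_left h, min_eq_left hκμ, max_eq_left (by linarith), min_eq_right (by linarith)]
    ring
  · rw [max_eq_right h, max_eq_right (by linarith)]
    rcases le_total lamh (κ * μ) with h2 | h2
    · rw [min_eq_left h2, min_eq_right (by linarith)]
      ring
    · rw [min_eq_right h2, min_eq_left (by linarith)]
      ring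

lemma gfun_hasDerivAt (κ lamh : ℝ) (hκ : 1 ≤ κ) (hl : 0 ≤ lamh) (μ : ℝ) :
    HasDerivAt (gfun κ lamh) (2 * max (μ - lamh) 0 + κ * (2 * min (κ * μ - lamh) 0)) μ := by
  have h1 : HasDerivAt (fun y : ℝ => max (y - lamh) 0 ^ 2) (2 * max (μ - lamh) 0) μ := by
    have := (phi_hasDerivAt (μ - lamh)).comp μ ((hasDerivAt_id μ).sub_const lamh)
    simpa [Function.comp_def] using this
  have h2 : HasDerivAt (fun y : ℝ => min (κ * y - lamh) 0 ^ 2) (κ * (2 * min (κ * μ - lamh) 0)) μ := by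
    have hin : HasDerivAt (fun y : ℝ => κ * y - lamh) κ μ := by
      simpa using ((hasDerivAt_id μ).const_mul κ).sub_const lamh
    have := (psi_hasDerivAt (κ * μ - lamh)).comp μ hin
    simpa [mul_comm, Function.comp_def] using this
  have h := h1.add h2
  have heq : gfun κ lamh = fun y => max (y - lamh) 0 ^ 2 + min (κ * y - lamh) 0 ^ 2 :=
    funext fun y => gfun_eq κ lamh hκ hl y
  rw [heq]
  exact h

lemma ffun_hasDerivAt (κ : ℝ) (p : ℕ) (lamhat : ℕ → ℝ) (hκ : 1 ≤ κ)
    (hnonneg : ∀ i : ℕ, 1 ≤ i → i ≤ p → 0 ≤ lamhat i) (μ : ℝ) :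
    HasDerivAt (ffun κ p lamhat) (Dfun κ p lamhat μ) μ := by
  have : HasDerivAt (fun y => ∑ i ∈ Finset.Icc 1 p, gfun κ (lamhat i) y)
      (Dfun κ p lamhat μ) μ := by
    apply HasDerivAt.fun_sum
    intro i hi
    simp only [Finset.mem_Icc] at hi
    exact gfun_hasDerivAt κ (lamhat i) hκ (hnonneg i hi.1 hi.2) μ
  exact this

lemma Dfun_continuous (κ : ℝ) (p : ℕ) (lamhat : ℕ → ℝ) : Continuous (Dfun κ p lamhat) := by
  apply continuous_finset_sum
  intro i _
  fun_prop

lemma term_mono (κ l : ℝ) (hκ : 1 ≤ κ) {x y : ℝ} (hxy : x ≤ y) :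
    2 * max (x - l) 0 + κ * (2 * min (κ * x - l) 0) ≤
    2 * max (y - l) 0 + κ * (2 * min (κ * y - l) 0) := by
  have hκ0 : (0:ℝ) ≤ κ := by linarith
  have h1 : max (x - l) 0 ≤ max (y - l) 0 := max_le_max (by linarith) le_rfl
  have h2 : min (κ * x - l) 0 ≤ min (κ * y - l) 0 := min_le_min (by nlinarith) le_rfl
  nlinarith

lemma Dfun_strictMono (κ : ℝ) (hκ : 1 ≤ κ) (p : ℕ) (hp : 0 < p) (lamhat : ℕ → ℝ)
    (hlast : lamhat p = 0) : StrictMono (Dfun κ p lamhat) := by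
  intro x y hxy
  have hκ0 : (0:ℝ) < κ := by linarith
  apply Finset.sum_lt_sum
  · intro i _
    exact term_mono κ (lamhat i) hκ hxy.le
  · refine ⟨p, Finset.mem_Icc.mpr ⟨hp, le_rfl⟩, ?_⟩
    rw [hlast]
    simp only [sub_zero]
    rcases le_or_gt 0 x with hx | hx
    · have hy : 0 < y := lt_of_le_of_lt hx hxy
      rw [max_eq_left hx, max_eq_left hy.le, min_eq_right (by nlinarith), min_eq_right (by nlinarith)]
      linarith
    · have h1 : max x 0 ≤ max y 0 := max_le_max hxy.le le_rfl
      have h2 : min (κ * x) 0 < min (κ * y) 0 := by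
        rw [min_eq_left (by nlinarith)]
        rcases le_or_gt (κ * y) 0 with h | h
        · rw [min_eq_left h]; nlinarith
        · rw [min_eq_right h.le]; nlinarith
      nlinarith

section signs
variable (κ : ℝ) (hκ : 1 ≤ κ) (p : ℕ) (hp : 0 < p) (lamhat : ℕ → ℝ)
    (hanti : ∀ i j : ℕ, 1 ≤ i → i ≤ j → j ≤ p → lamhat j ≤ lamhat i)
    (hnonneg : ∀ i : ℕ, 1 ≤ i → i ≤ p → 0 ≤ lamhat i)
    (hfirst : 0 < lamhat 1) (hlast : lamhat p = 0)

include hκ hp hanti hfirst hlast in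
lemma Dfun_pos_top : 0 < Dfun κ p lamhat (lamhat 1) := by
  have hκ0 : (0:ℝ) < κ := by linarith
  apply Finset.sum_pos'
  · intro i hi
    simp only [Finset.mem_Icc] at hi
    have h1 : lamhat i ≤ lamhat 1 := hanti 1 i le_rfl hi.1 hi.2
    have h2 : min (κ * lamhat 1 - lamhat i) 0 = 0 := min_eq_right (by nlinarith)
    rw [h2]
    positivity
  · refine ⟨p, Finset.mem_Icc.mpr ⟨hp, le_rfl⟩, ?_⟩
    rw [hlast]
    have h2 : min (κ * lamhat 1 - 0) 0 = 0 := min_eq_right (by nlinarith)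
    rw [h2, sub_zero, max_eq_left hfirst.le]
    linarith

include hκ hanti hfirst in
lemma Dfun_nonneg_mid : 0 ≤ Dfun κ p lamhat (lamhat 1 / κ) := by
  have hκ0 : (0:ℝ) < κ := by linarith
  apply Finset.sum_nonneg
  intro i hi
  simp only [Finset.mem_Icc] at hi
  have h1 : lamhat i ≤ lamhat 1 := hanti 1 i le_rfl hi.1 hi.2
  have hcancel : κ * (lamhat 1 / κ) = lamhat 1 := by field_simp
  have h2 : min (κ * (lamhat 1 / κ) - lamhat i) 0 = 0 := min_eq_right (by rw [hcancel]; linarith)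
  rw [h2]
  positivity

include hκ hp hnonneg hfirst in
lemma Dfun_neg_bot :
    Dfun κ p lamhat (lamhat 1 / (κ * (1 + p + κ ^ 2))) < 0 := by
  have hκ0 : (0:ℝ) < κ := by linarith
  set ε : ℝ := lamhat 1 / (κ * (1 + p + κ ^ 2)) with hε
  have hden : (0:ℝ) < κ * (1 + p + κ ^ 2) := by positivity
  have hε0 : 0 < ε := div_pos hfirst hden
  have hεc : ε * (κ * (1 + p + κ ^ 2)) = lamhat 1 := div_mul_cancel₀ _ hden.ne'
  have hp1 : (1:ℝ) ≤ (p:ℝ) := by exact_mod_cast hp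
  have hκε : κ * ε < lamhat 1 := by nlinarith [hεc, mul_pos hκ0 hε0, sq_nonneg κ]
  have hmem : 1 ∈ Finset.Icc 1 p := Finset.mem_Icc.mpr ⟨le_rfl, hp⟩
  unfold Dfun
  rw [← Finset.add_sum_erase _ _ hmem]
  have hterm1 : 2 * max (ε - lamhat 1) 0 + κ * (2 * min (κ * ε - lamhat 1) 0)
      = 2 * κ * (κ * ε - lamhat 1) := by
    rw [max_eq_right (by nlinarith), min_eq_left (by linarith)]
    ring
  have hbound : ∀ i ∈ (Finset.Icc 1 p).erase 1,
      2 * max (ε - lamhat i) 0 + κ * (2 * min (κ * ε - lamhat i) 0) ≤ 2 * ε := by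
    intro i hi
    have hi' := Finset.mem_of_mem_erase hi
    simp only [Finset.mem_Icc] at hi'
    have hni : 0 ≤ lamhat i := hnonneg i hi'.1 hi'.2
    have h1 : max (ε - lamhat i) 0 ≤ ε := max_le (by linarith) hε0.le
    have h2 : min (κ * ε - lamhat i) 0 ≤ 0 := min_le_right _ _
    nlinarith
  have hsum : ∑ i ∈ (Finset.Icc 1 p).erase 1,
      (2 * max (ε - lamhat i) 0 + κ * (2 * min (κ * ε - lamhat i) 0))
      ≤ ((Finset.Icc 1 p).erase 1).card * (2 * ε) := by
    calc _ ≤ ∑ _i ∈ (Finset.Icc 1 p).erase 1, (2 * ε) := Finset.sum_le_sum hbound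
    _ = _ := by rw [Finset.sum_const, nsmul_eq_mul]
  have hcard : (((Finset.Icc 1 p).erase 1).card : ℝ) ≤ p := by
    have := Finset.card_erase_le (a := 1) (s := Finset.Icc 1 p)
    have h2 : (Finset.Icc 1 p).card = p := by simp
    exact_mod_cast le_trans this (le_of_eq h2)
  have hkey : 2 * κ * (κ * ε - lamhat 1) + (p:ℝ) * (2 * ε) < 0 := by
    nlinarith [hεc, hε0, hκ0, sq_nonneg κ, sq_nonneg (κ*κ),
      mul_pos (mul_pos (mul_pos hκ0 hκ0) (mul_pos hκ0 hκ0)) hε0,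
      mul_nonneg (mul_nonneg (sub_nonneg.mpr (by nlinarith : (1:ℝ) ≤ κ^2)) hε0.le) (by linarith : (0:ℝ) ≤ (p:ℝ))]
  have hc2 : (((Finset.Icc 1 p).erase 1).card : ℝ) * (2 * ε) ≤ (p:ℝ) * (2 * ε) :=
    mul_le_mul_of_nonneg_right hcard (by linarith)
  linarith [hterm1, hsum]

end signs

theorem stmt12 (κ : ℝ) (hκ : 1 ≤ κ) (p : ℕ) (hp : 0 < p) (lamhat : ℕ → ℝ)
    -- λ̂₁ ≥ λ̂₂ ≥ ⋯ ≥ λ̂_p ≥ 0: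
    (hanti : ∀ i j : ℕ, 1 ≤ i → i ≤ j → j ≤ p → lamhat j ≤ lamhat i)
    (hnonneg : ∀ i : ℕ, 1 ≤ i → i ≤ p → 0 ≤ lamhat i)
    -- λ̂₁ > 0 and λ̂_p = 0:
    (hfirst : 0 < lamhat 1) (hlast : lamhat p = 0) :
    ∃ μstar : ℝ, 0 < μstar ∧
      (∀ μ : ℝ, 0 < μ → ffun κ p lamhat μstar ≤ ffun κ p lamhat μ) ∧
      (∀ μ : ℝ, 0 < μ → (∀ ν : ℝ, 0 < ν → ffun κ p lamhat μ ≤ ffun κ p lamhat ν) →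
        μ = μstar) ∧
      μstar ≤ lamhat 1 / κ ∧
      deriv (ffun κ p lamhat) μstar = 0 := by
  have hκ0 : (0:ℝ) < κ := by linarith
  set D := Dfun κ p lamhat with hD
  set f := ffun κ p lamhat with hf
  have hDmono : StrictMono D := Dfun_strictMono κ hκ p hp lamhat hlast
  have hderiv : ∀ x : ℝ, HasDerivAt f (D x) x :=
    fun x => ffun_hasDerivAt κ p lamhat hκ hnonneg x
  have hfc : Continuous f := continuous_iff_continuousAt.mpr fun x => (hderiv x).continuousAt
  set ε : ℝ := lamhat 1 / (κ * (1 + p + κ ^ 2)) with hε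
  have hp1 : (1:ℝ) ≤ (p:ℝ) := by exact_mod_cast hp
  have hden : (0:ℝ) < κ * (1 + p + κ ^ 2) := by positivity
  have hε0 : 0 < ε := div_pos hfirst hden
  have hεle : ε ≤ lamhat 1 := by
    rw [hε, div_le_iff₀ hden]
    nlinarith [mul_nonneg hfirst.le (show (0:ℝ) ≤ κ * (1 + p + κ ^ 2) - 1 by nlinarith)]
  have hDε : D ε < 0 := Dfun_neg_bot κ hκ p hp lamhat hnonneg hfirst
  have hDtop : 0 < D (lamhat 1) := Dfun_pos_top κ hκ p hp lamhat hanti hfirst hlast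
  -- IVT
  obtain ⟨μstar, hμmem, hDμ⟩ :=
    intermediate_value_Icc hεle (Dfun_continuous κ p lamhat).continuousOn
      (Set.mem_Icc.mpr ⟨hDε.le, hDtop.le⟩)
  replace hDμ : D μstar = 0 := hDμ
  have hμ0 : 0 < μstar := lt_of_lt_of_le hε0 hμmem.1
  have hderiveq : ∀ x : ℝ, deriv f x = D x := fun x => (hderiv x).deriv
  -- strict monotonicity of f on either side of μstar
  have hmono : StrictMonoOn f (Set.Ici μstar) := by
    apply strictMonoOn_of_deriv_pos (convex_Ici _) hfc.continuousOn
    intro x hx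
    rw [interior_Ici] at hx
    rw [hderiveq]
    rw [← hDμ]
    exact hDmono hx
  have hantif : StrictAntiOn f (Set.Iic μstar) := by
    apply strictAntiOn_of_deriv_neg (convex_Iic _) hfc.continuousOn
    intro x hx
    rw [interior_Iic] at hx
    rw [hderiveq]
    rw [← hDμ]
    exact hDmono hx
  have hkey : ∀ μ : ℝ, μ ≠ μstar → f μstar < f μ := by
    intro μ hne
    rcases lt_or_gt_of_ne hne with h | h
    · exact hantif h.le (le_refl μstar : μstar ∈ Set.Iic μstar) h
    · exact hmono (le_refl μstar : μstar ∈ Set.Ici μstar) h.le h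
  refine ⟨μstar, hμ0, ?_, ?_, ?_, ?_⟩
  · intro μ hμ
    rcases eq_or_ne μ μstar with rfl | hne
    · exact le_rfl
    · exact (hkey μ hne).le
  · intro μ hμ hmin
    by_contra hne
    exact absurd (hmin μstar hμ0) (not_le.mpr (hkey μ hne))
  · by_contra h
    push_neg at h
    have h1 : D (lamhat 1 / κ) < D μstar := hDmono h
    rw [hDμ] at h1
    exact absurd (Dfun_nonneg_mid κ hκ p lamhat hanti hfirst) (not_le.mpr h1)
  · rw [hderiveq, hDμ]
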